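/- arXiv:1804.02194 — 2 statements merged into one kernel-verified Lean document; each statement's English description precedes it below -/
import Mathlib

section
/- Let V be a countably infinite set and par : V → V an injective map with no periodic points (the parent map of an infinite unrooted directed tree all of whose vertices have outdegree at most 1). Let 1 ≤ p < ∞ and let λ = (λ_v)_{v∈V} be positive reals with sup_{v∈V} λ_v/λ_{par(v)} < ∞ and sup_{v∈V} λ_v/λ_{par²(v)} < ∞, so that the shifts S₁ and S₂ defined by (S₁f)(v) = f(par(v)) and (S₂f)(v) = f(par²(v)) are bounded operators on L^p(V,λ). For m ≥ 1 and v ∈ V, write λ_{chi^m(v)} := λ_u if there exists (a necessarily unique) u ∈ V with par^m(u) = v, and λ_{chi^m(v)} := 0 otherwise. Then S₁ and S₂² are densely d-hypercyclic on L^p(V,λ) if and only if there exists a strictly increasing sequence (n_k)_{k≥1} of positive integers such that for every v ∈ V, as k → ∞: λ_{par^{n_k}(v)} → 0, λ_{par^{4 n_k}(v)} → 0, λ_{par^{3 n_k}(v)} → 0, λ_{chi^{n_k}(v)} → 0, λ_{chi^{4 n_k}(v)} → 0, and λ_{chi^{3 n_k}(v)} → 0. -/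
open Filter Topology
open scoped Classical

/-- `chiWeight par lam m v` is `λ_{chi^m(v)}`: the weight `lam u` of the (necessarily unique,
when `par` is injective) `u` with `par^[m] u = v`, and `0` if no such `u` exists. -/
noncomputable def chiWeight {V : Type*} (par : V → V) (lam : V → ℝ) (m : ℕ) (v : V) : ℝ :=
  if h : ∃ u, par^[m] u = v then lam (Classical.choose h) else 0



section aux
variable {V : Type*} {par : V → V} {lam : V → ℝ}

lemma chiWeight_nonneg (hlam : ∀ v, 0 < lam v) (m : ℕ) (v : V) :
    0 ≤ chiWeight par lam m v := by
  unfold chiWeight; split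
  · exact (hlam _).le
  · exact le_rfl

lemma chiWeight_eq (hpar : Function.Injective par) {m : ℕ} {u v : V}
    (h : par^[m] u = v) : chiWeight par lam m v = lam u := by
  rw [chiWeight, dif_pos ⟨u, h⟩]
  congr 1
  exact (hpar.iterate m) ((Classical.choose_spec (⟨u, h⟩ : ∃ u, par^[m] u = v)).trans h.symm)

lemma chiWeight_eq_zero {m : ℕ} {v : V} (h : ¬ ∃ u, par^[m] u = v) :
    chiWeight par lam m v = 0 := dif_neg h

-- no-periodicity consequences
lemma iter_inj_of_aperiodic (hpar : Function.Injective par)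
    (hper : ∀ v : V, ∀ M : ℕ, 1 ≤ M → par^[M] v ≠ v) (v : V) :
    Function.Injective (fun m : ℕ => par^[m] v) := by
  intro m m' h
  by_contra hne
  wlog hlt : m < m' generalizing m m'
  · exact this h.symm (Ne.symm hne) (by omega)
  · have : par^[m' - m] (par^[m] v) = par^[m] v := by
      rw [← Function.iterate_add_apply]
      rw [show m' - m + m = m' by omega]
      exact h.symm
    exact hper _ _ (by omega) this
end aux

section normlem
variable {V : Type*} {p : ℝ} {lam : V → ℝ}
variable {X : Type*} [NormedAddCommGroup X] [NormedSpace ℂ X]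
variable {J : X →ₗ[ℂ] (V → ℂ)}

lemma norm_rpow (hp0 : 0 < p) (hlam : ∀ v, 0 < lam v)
    (hnorm : ∀ x : X, ‖x‖ = (∑' v, ‖J x v‖ ^ p * lam v) ^ (1 / p)) (x : X) :
    ‖x‖ ^ p = ∑' v, ‖J x v‖ ^ p * lam v := by
  have ht : (0:ℝ) ≤ ∑' v, ‖J x v‖ ^ p * lam v :=
    tsum_nonneg fun v => mul_nonneg (Real.rpow_nonneg (norm_nonneg _) p) (hlam v).le
  rw [hnorm x, ← Real.rpow_mul ht, one_div_mul_cancel hp0.ne', Real.rpow_one]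

lemma tsum_nonneg' (hlam : ∀ v, 0 < lam v) (g : V → ℂ) :
    (0:ℝ) ≤ ∑' v, ‖g v‖ ^ p * lam v :=
  tsum_nonneg fun v => mul_nonneg (Real.rpow_nonneg (norm_nonneg _) p) (hlam v).le

lemma coord_le (hp0 : 0 < p) (hlam : ∀ v, 0 < lam v)
    (hmem : ∀ x : X, Summable fun v => ‖J x v‖ ^ p * lam v)
    (hnorm : ∀ x : X, ‖x‖ = (∑' v, ‖J x v‖ ^ p * lam v) ^ (1 / p))
    {x y : X} {ε : ℝ} (h : ‖x - y‖ ≤ ε) (v : V) :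
    ‖J x v - J y v‖ ^ p * lam v ≤ ε ^ p := by
  have h1 : ‖J (x - y) v‖ ^ p * lam v ≤ ∑' v, ‖J (x-y) v‖ ^ p * lam v :=
    Summable.le_tsum (hmem (x - y)) v fun v' _ =>
      mul_nonneg (Real.rpow_nonneg (norm_nonneg _) p) (hlam v').le
  have h2 : ∑' v, ‖J (x-y) v‖ ^ p * lam v = ‖x - y‖ ^ p :=
    (norm_rpow hp0 hlam hnorm _).symm
  have h3 : ‖x - y‖ ^ p ≤ ε ^ p := Real.rpow_le_rpow (norm_nonneg _) h hp0.le
  have h4 : J (x - y) v = J x v - J y v := by simp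
  rw [h4] at h1
  linarith

lemma key_small (hp0 : 0 < p) {a : ℂ} {lv lu ε : ℝ} (hlv : 0 < lv)
    (hε : 0 < ε) (hεs : ε ≤ lv ^ (1/p) / 2)
    (h1 : ‖a - 1‖ ^ p * lv ≤ ε ^ p) (h2 : ‖a‖ ^ p * lu ≤ ε ^ p) :
    lu ≤ (2 * ε) ^ p := by
  rcases le_or_gt lu 0 with hlu0 | hlu0
  · exact le_trans hlu0 (Real.rpow_nonneg (by positivity) p)
  have hhalf : ‖a - 1‖ ≤ 1 / 2 := by
    by_contra hc
    push_neg at hc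
    have hlt : ((1:ℝ)/2) ^ p < ‖a - 1‖ ^ p := Real.rpow_lt_rpow (by norm_num) hc hp0
    have hεp : ε ^ p ≤ (lv ^ (1/p) / 2) ^ p := Real.rpow_le_rpow hε.le hεs hp0.le
    have hcompute : (lv ^ (1/p) / 2) ^ p = lv * ((1:ℝ)/2) ^ p := by
      rw [div_eq_mul_inv, Real.mul_rpow (Real.rpow_nonneg hlv.le _) (by norm_num),
        ← Real.rpow_mul hlv.le, one_div_mul_cancel hp0.ne', Real.rpow_one]
      rw [show ((2:ℝ)⁻¹) = (1:ℝ)/2 by norm_num]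
    have : ‖a - 1‖ ^ p * lv ≤ lv * (1/2 :ℝ) ^ p := by
      calc ‖a - 1‖ ^ p * lv ≤ ε ^ p := h1
      _ ≤ _ := by rw [← hcompute]; exact hεp
    nlinarith [Real.rpow_nonneg (show (0:ℝ) ≤ 1/2 by norm_num) p]
  have hna : (1:ℝ)/2 ≤ ‖a‖ := by
    have := norm_sub_norm_le (1:ℂ) a
    rw [norm_sub_rev, norm_one] at this
    linarith
  have h5 : ((1:ℝ)/2) ^ p * lu ≤ ε ^ p := by
    have : ((1:ℝ)/2) ^ p ≤ ‖a‖ ^ p := Real.rpow_le_rpow (by norm_num) hna hp0.le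
    nlinarith
  have : (2 * ε) ^ p = 2 ^ p * ε ^ p := Real.mul_rpow (by norm_num) hε.le
  rw [this]
  have h6 : ((1:ℝ)/2) ^ p = (2 ^ p)⁻¹ := by
    rw [show ((1:ℝ)/2) = 2⁻¹ by norm_num, Real.inv_rpow (by norm_num)]
  rw [h6] at h5
  have h2p : (0:ℝ) < 2 ^ p := Real.rpow_pos_of_pos (by norm_num) p
  rw [inv_mul_le_iff₀ h2p] at h5
  linarith
end normlem

section ops
variable {V : Type*} {par : V → V} {p : ℝ} {lam : V → ℝ}
variable {X : Type*} [NormedAddCommGroup X] [NormedSpace ℂ X]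
variable {J : X →ₗ[ℂ] (V → ℂ)} {S₁ S₂ : X →L[ℂ] X}

lemma summable_of_fin_supp (hp0 : 0 < p) (hlam : ∀ v, 0 < lam v)
    {g : V → ℂ} {s : Finset V} (hg : ∀ v ∉ s, g v = 0) :
    Summable fun v => ‖g v‖ ^ p * lam v := by
  apply summable_of_ne_finset_zero (s := s)
  intro v hv
  simp [hg v hv, Real.zero_rpow hp0.ne']

lemma tsum_of_fin_supp (hp0 : 0 < p)
    {g : V → ℂ} {s : Finset V} (hg : ∀ v ∉ s, g v = 0) :
    ∑' v, ‖g v‖ ^ p * lam v = ∑ v ∈ s, ‖g v‖ ^ p * lam v := by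
  apply tsum_eq_sum
  intro v hv
  simp [hg v hv, Real.zero_rpow hp0.ne']

lemma coordS1 (hS₁ : ∀ (x : X) (v : V), J (S₁ x) v = J x (par v)) (n : ℕ) (x : X) (v : V) :
    J ((S₁ ^ n) x) v = J x (par^[n] v) := by
  induction n generalizing x v with
  | zero => simp
  | succ n ih =>
    rw [pow_succ, ContinuousLinearMap.mul_apply, ih, hS₁, Function.iterate_succ_apply']

lemma coordS4_one (hS₂ : ∀ (x : X) (v : V), J (S₂ x) v = J x (par (par v))) (x : X) (v : V) :
    J ((S₂ ^ 2) x) v = J x (par^[4] v) := by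
  rw [show (S₂ ^ 2) = S₂ * S₂ by rw [pow_two], ContinuousLinearMap.mul_apply, hS₂, hS₂]
  simp [Function.iterate_succ_apply']

lemma coordS4 (hS₂ : ∀ (x : X) (v : V), J (S₂ x) v = J x (par (par v))) (n : ℕ) (x : X) (v : V) :
    J (((S₂ ^ 2) ^ n) x) v = J x (par^[4 * n] v) := by
  induction n generalizing x v with
  | zero => simp
  | succ n ih =>
    rw [pow_succ, ContinuousLinearMap.mul_apply, ih, coordS4_one hS₂]
    simp only [← Function.iterate_add_apply]
    congr 1
    ring

end ops

noncomputable def pull {V : Type*} (par : V → V) (m : ℕ) (g : V → ℂ) : V → ℂ :=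
  fun u => if h : ∃ w, par^[m] w = u then g (Classical.choose h) else 0

section pulllem
variable {V : Type*} {par : V → V} {p : ℝ} {lam : V → ℝ}

lemma pull_apply (hpar : Function.Injective par) (m : ℕ) (g : V → ℂ) (w : V) :
    pull par m g (par^[m] w) = g w := by
  rw [pull, dif_pos ⟨w, rfl⟩]
  congr 1
  exact (hpar.iterate m) (Classical.choose_spec (⟨w, rfl⟩ : ∃ u, par^[m] u = par^[m] w))

lemma pull_supp {g : V → ℂ} {s : Finset V} (hg : ∀ v ∉ s, g v = 0) (m : ℕ) :
    ∀ u ∉ s.image (par^[m]), pull par m g u = 0 := by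
  intro u hu
  rw [pull]
  split
  · rename_i h
    apply hg
    intro hmem
    exact hu (Finset.mem_image.2 ⟨_, hmem, Classical.choose_spec h⟩)
  · rfl

lemma pull_tsum (hpar : Function.Injective par) (hp0 : 0 < p)
    {g : V → ℂ} {s : Finset V} (hg : ∀ v ∉ s, g v = 0) (m : ℕ) :
    ∑' u, ‖pull par m g u‖ ^ p * lam u = ∑ w ∈ s, ‖g w‖ ^ p * lam (par^[m] w) := by
  rw [tsum_eq_sum (s := s.image (par^[m]))
    (fun u hu => by simp [pull_supp hg m u hu, Real.zero_rpow hp0.ne'])]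
  rw [Finset.sum_image (fun a _ b _ h => (hpar.iterate m) h)]
  exact Finset.sum_congr rfl fun w _ => by rw [pull_apply hpar]

lemma pull_shift (hpar : Function.Injective par) (n : ℕ) (g : V → ℂ) (u : V) :
    pull par (4 * n) g (par^[n] u) = pull par (3 * n) g u := by
  by_cases h : ∃ w, par^[3 * n] w = u
  · obtain ⟨w, rfl⟩ := h
    rw [pull_apply hpar, show par^[n] (par^[3*n] w) = par^[4*n] w by
      rw [← Function.iterate_add_apply]; congr 1; ring, pull_apply hpar]
  · rw [pull, pull, dif_neg h, dif_neg]
    rintro ⟨w, hw⟩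
    exact h ⟨w, (hpar.iterate n) (by rw [← hw, ← Function.iterate_add_apply]; congr 1; ring)⟩

lemma pull_shift4 (hpar : Function.Injective par) (n : ℕ) (g : V → ℂ) (u : V) :
    pull par n g (par^[4 * n] u) = g (par^[3 * n] u) := by
  rw [show par^[4*n] u = par^[n] (par^[3*n] u) by
    rw [← Function.iterate_add_apply]; congr 1; ring, pull_apply hpar]

lemma comp_tsum_le (hpar : Function.Injective par) (hp0 : 0 < p) (hlam : ∀ v, 0 < lam v)
    {g : V → ℂ} {s : Finset V} (hg : ∀ v ∉ s, g v = 0) (m : ℕ) :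
    ∑' v, ‖g (par^[m] v)‖ ^ p * lam v ≤ ∑ w ∈ s, ‖g w‖ ^ p * chiWeight par lam m w := by
  have hTfin : ((par^[m]) ⁻¹' ↑s).Finite :=
    Set.Finite.preimage (Set.injOn_of_injective (hpar.iterate m)) s.finite_toSet
  rw [tsum_eq_sum (s := hTfin.toFinset) (fun u hu => by
    have : g (par^[m] u) = 0 := hg _ (by simpa [Set.Finite.mem_toFinset] using hu)
    simp [this, Real.zero_rpow hp0.ne'])]
  have hstep : ∀ v ∈ hTfin.toFinset,
      ‖g (par^[m] v)‖ ^ p * lam v = ‖g (par^[m] v)‖ ^ p * chiWeight par lam m (par^[m] v) := by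
    intro v _
    rw [chiWeight_eq hpar rfl]
  rw [Finset.sum_congr rfl hstep]
  rw [← Finset.sum_image (f := fun w => ‖g w‖ ^ p * chiWeight par lam m w)
    (fun a _ b _ h => (hpar.iterate m) h)]
  apply Finset.sum_le_sum_of_subset_of_nonneg
  · intro w hw
    obtain ⟨v, hv, rfl⟩ := Finset.mem_image.1 hw
    simpa [Set.Finite.mem_toFinset] using hv
  · intro w _ _
    apply mul_nonneg (Real.rpow_nonneg (norm_nonneg _) p)
    rw [chiWeight]; split
    · exact (hlam _).le
    · exact le_rfl
end pulllem

section dense1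
variable {V : Type*} {p : ℝ} {lam : V → ℝ}
variable {X : Type*} [NormedAddCommGroup X] [NormedSpace ℂ X]
variable {J : X →ₗ[ℂ] (V → ℂ)}

lemma rpow_lt_reflect (hp0 : 0 < p) {a b : ℝ} (ha : 0 ≤ a) (hb : 0 < b)
    (h : a ^ p < b ^ p) : a < b := by
  by_contra hc
  push_neg at hc
  exact absurd h (not_lt.2 (Real.rpow_le_rpow hb.le hc hp0.le))

lemma rpow_le_reflect (hp0 : 0 < p) {a b : ℝ} (ha : 0 ≤ a) (hb : 0 ≤ b)
    (h : a ^ p ≤ b ^ p) : a ≤ b := by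
  by_contra hc
  push_neg at hc
  exact absurd h (not_le.2 (Real.rpow_lt_rpow hb hc hp0))

lemma summable_of_fin_supp' (hp0 : 0 < p)
    {g : V → ℂ} {s : Finset V} (hg : ∀ v ∉ s, g v = 0) :
    Summable fun v => ‖g v‖ ^ p * lam v := by
  apply summable_of_ne_finset_zero (s := s)
  intro v hv
  simp [hg v hv, Real.zero_rpow hp0.ne']

lemma approx_fin (hp0 : 0 < p) (hlam : ∀ v, 0 < lam v)
    (hmem : ∀ x : X, Summable fun v => ‖J x v‖ ^ p * lam v)
    (hnorm : ∀ x : X, ‖x‖ = (∑' v, ‖J x v‖ ^ p * lam v) ^ (1 / p))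
    (hsurj : ∀ g : V → ℂ, (Summable fun v => ‖g v‖ ^ p * lam v) → ∃ x : X, J x = g)
    (x : X) {ε : ℝ} (hε : 0 < ε) :
    ∃ (y : X) (s : Finset V), (∀ v ∉ s, J y v = 0) ∧ ‖x - y‖ < ε := by
  have hεp : 0 < ε ^ p := Real.rpow_pos_of_pos hε p
  obtain ⟨s, hs⟩ : ∃ s : Finset V,
      ∑' (v : {v // v ∉ s}), (‖J x ↑v‖ ^ p * lam ↑v) < ε ^ p := by
    have := (tendsto_order.1 (tendsto_tsum_compl_atTop_zero
      (fun v => ‖J x v‖ ^ p * lam v))).2 _ hεp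
    exact this.exists
  set g : V → ℂ := fun v => if v ∈ s then J x v else 0 with hgdef
  have hgsupp : ∀ v ∉ s, g v = 0 := fun v hv => by simp [hgdef, hv]
  obtain ⟨y, hy⟩ := hsurj g (summable_of_fin_supp' hp0 hgsupp)
  refine ⟨y, s, fun v hv => by rw [hy]; exact hgsupp v hv, ?_⟩
  have hnn : (0:ℝ) ≤ ‖x - y‖ := norm_nonneg _
  apply rpow_lt_reflect hp0 hnn hε
  have hxy : ‖x - y‖ ^ p = ∑' v, ‖J x v - g v‖ ^ p * lam v := by
    rw [norm_rpow hp0 hlam hnorm]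
    congr 1; funext v; rw [map_sub]; simp [hy]
  rw [hxy]
  have heq : (fun v => ‖J x v - g v‖ ^ p * lam v)
      = fun v => Set.indicator {v : V | v ∉ s} (fun v => ‖J x v‖ ^ p * lam v) v := by
    funext v
    by_cases hv : v ∈ s
    · simp [hgdef, hv, Set.indicator, Real.zero_rpow hp0.ne']
    · simp [hgdef, hv, Set.indicator]
  rw [heq, ← tsum_subtype]
  exact lt_of_le_of_lt (le_of_eq (by rfl)) hs
end dense1
section dense2
variable {V : Type*} [Countable V] {p : ℝ} {lam : V → ℝ}
variable {X : Type*} [NormedAddCommGroup X] [NormedSpace ℂ X]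
variable {J : X →ₗ[ℂ] (V → ℂ)}

lemma complex_rat_near (z : ℂ) {δ : ℝ} (hδ : 0 < δ) :
    ∃ q : ℚ × ℚ, ‖z - ((q.1 : ℂ) + (q.2 : ℂ) * Complex.I)‖ < δ := by
  obtain ⟨q1, hq1⟩ := exists_rat_near z.re (by positivity : (0:ℝ) < δ/2)
  obtain ⟨q2, hq2⟩ := exists_rat_near z.im (by positivity : (0:ℝ) < δ/2)
  refine ⟨(q1, q2), ?_⟩
  set w : ℂ := z - ((q1 : ℂ) + (q2 : ℂ) * Complex.I)
  have hre : w.re = z.re - q1 := by simp [w]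
  have him : w.im = z.im - q2 := by simp [w]
  calc ‖w‖ ≤ |w.re| + |w.im| := Complex.norm_le_abs_re_add_abs_im w
  _ < δ := by rw [hre, him]; linarith

lemma separableX (hp0 : 0 < p) (hlam : ∀ v, 0 < lam v)
    (hmem : ∀ x : X, Summable fun v => ‖J x v‖ ^ p * lam v)
    (hnorm : ∀ x : X, ‖x‖ = (∑' v, ‖J x v‖ ^ p * lam v) ^ (1 / p))
    (hsurj : ∀ g : V → ℂ, (Summable fun v => ‖g v‖ ^ p * lam v) → ∃ x : X, J x = g) :
    TopologicalSpace.SeparableSpace X := by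
  have base : ∀ q : V →₀ ℚ × ℚ, ∃ x : X,
      J x = fun v => ((q v).1 : ℂ) + ((q v).2 : ℂ) * Complex.I := by
    intro q
    apply hsurj
    apply summable_of_fin_supp' hp0 (s := q.support)
    intro v hv
    rw [Finsupp.notMem_support_iff] at hv
    simp [hv]
  set Φ : (V →₀ ℚ × ℚ) → X := fun q => (base q).choose with hΦ
  refine ⟨Set.range Φ, Set.countable_range Φ, ?_⟩
  rw [Metric.dense_iff]
  intro x r hr
  obtain ⟨y, s, hysupp, hxy⟩ := approx_fin hp0 hlam hmem hnorm hsurj x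
    (by positivity : (0:ℝ) < r/2)
  -- now approximate y by a rational point
  set L : ℝ := ∑ v ∈ s, lam v with hL
  have hL0 : 0 ≤ L := Finset.sum_nonneg fun v _ => (hlam v).le
  set c : ℝ := ((r/2) ^ p / (L + 1)) ^ (1/p) with hc
  have hc0 : 0 < c := by
    apply Real.rpow_pos_of_pos
    apply div_pos (Real.rpow_pos_of_pos (by positivity) p) (by linarith)
  have hcp : c ^ p = (r/2) ^ p / (L + 1) := by
    rw [hc, ← Real.rpow_mul (by positivity), one_div_mul_cancel hp0.ne', Real.rpow_one]
  -- choose rationals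
  have hchoice : ∀ v : V, ∃ q : ℚ × ℚ,
      (v ∈ s → ‖J y v - ((q.1 : ℂ) + (q.2 : ℂ) * Complex.I)‖ < c) ∧ (v ∉ s → q = 0) := by
    intro v
    by_cases hv : v ∈ s
    · obtain ⟨q, hq⟩ := complex_rat_near (J y v) hc0
      exact ⟨q, fun _ => hq, fun h => absurd hv h⟩
    · exact ⟨0, fun h => absurd h hv, fun _ => rfl⟩
  choose qf hqf1 hqf2 using hchoice
  set q : V →₀ ℚ × ℚ := Finsupp.onFinset s qf (fun v hv => by
    by_contra hvs
    exact hv (hqf2 v hvs)) with hq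
  have hqv : ∀ v, q v = qf v := fun v => rfl
  refine ⟨Φ q, ?_, Set.mem_range_self q⟩
  rw [Metric.mem_ball, dist_comm, dist_eq_norm]
  have hJΦ : J (Φ q) = fun v => ((q v).1 : ℂ) + ((q v).2 : ℂ) * Complex.I := (base q).choose_spec
  have hyΦ : ‖y - Φ q‖ < r/2 := by
    apply rpow_lt_reflect hp0 (norm_nonneg _) (by positivity)
    rw [norm_rpow hp0 hlam hnorm]
    have hg : ∀ v ∉ s, J (y - Φ q) v = 0 := by
      intro v hv
      rw [map_sub]
      simp only [Pi.sub_apply, hJΦ, hqv, hqf2 v hv, hysupp v hv]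
      simp
    rw [tsum_of_fin_supp hp0 hg]
    have hbound : ∀ v ∈ s, ‖J (y - Φ q) v‖ ^ p * lam v ≤ c ^ p * lam v := by
      intro v hv
      apply mul_le_mul_of_nonneg_right _ (hlam v).le
      apply Real.rpow_le_rpow (norm_nonneg _) _ hp0.le
      have : J (y - Φ q) v = J y v - (((q v).1 : ℂ) + ((q v).2 : ℂ) * Complex.I) := by
        rw [map_sub]; simp [hJΦ]
      rw [this, hqv]
      exact (hqf1 v hv).le
    calc ∑ v ∈ s, ‖J (y - Φ q) v‖ ^ p * lam v ≤ ∑ v ∈ s, c ^ p * lam v :=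
          Finset.sum_le_sum hbound
    _ = c ^ p * L := by rw [← Finset.mul_sum]
    _ < (r/2) ^ p := by
        rw [hcp]
        rw [div_mul_eq_mul_div, div_lt_iff₀ (by linarith)]
        have h1 : (0:ℝ) < (r/2) ^ p := Real.rpow_pos_of_pos (by positivity) p
        nlinarith
  calc ‖x - Φ q‖ ≤ ‖x - y‖ + ‖y - Φ q‖ := by
        have : x - Φ q = (x - y) + (y - Φ q) := by abel
        rw [this]; exact norm_add_le _ _
  _ < r/2 + r/2 := add_lt_add hxy hyΦ
  _ = r := by ring
end dense2
section transit
variable {V : Type*} {par : V → V} {p : ℝ} {lam : V → ℝ}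
variable {X : Type*} [NormedAddCommGroup X] [NormedSpace ℂ X]
variable {J : X →ₗ[ℂ] (V → ℂ)} {S₁ S₂ : X →L[ℂ] X}

lemma transit (hpar : Function.Injective par) (hp0 : 0 < p) (hlam : ∀ v, 0 < lam v)
    (hJ : Function.Injective J)
    (hmem : ∀ x : X, Summable fun v => ‖J x v‖ ^ p * lam v)
    (hnorm : ∀ x : X, ‖x‖ = (∑' v, ‖J x v‖ ^ p * lam v) ^ (1 / p))
    (hsurj : ∀ g : V → ℂ, (Summable fun v => ‖g v‖ ^ p * lam v) → ∃ x : X, J x = g)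
    (hS₁ : ∀ (x : X) (v : V), J (S₁ x) v = J x (par v))
    (hS₂ : ∀ (x : X) (v : V), J (S₂ x) v = J x (par (par v)))
    (n : ℕ → ℕ)
    (hconv : ∀ v : V,
        Tendsto (fun k => lam (par^[n k] v)) atTop (𝓝 0) ∧
        Tendsto (fun k => lam (par^[4 * n k] v)) atTop (𝓝 0) ∧
        Tendsto (fun k => lam (par^[3 * n k] v)) atTop (𝓝 0) ∧
        Tendsto (fun k => chiWeight par lam (n k) v) atTop (𝓝 0) ∧
        Tendsto (fun k => chiWeight par lam (4 * n k) v) atTop (𝓝 0) ∧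
        Tendsto (fun k => chiWeight par lam (3 * n k) v) atTop (𝓝 0))
    {U U₁ U₂ : Set X} (hU : IsOpen U) (hU₁ : IsOpen U₁) (hU₂ : IsOpen U₂)
    (hUne : U.Nonempty) (hU₁ne : U₁.Nonempty) (hU₂ne : U₂.Nonempty) :
    ∃ (z : X) (m : ℕ), z ∈ U ∧ (S₁ ^ m) z ∈ U₁ ∧ ((S₂ ^ 2) ^ m) z ∈ U₂ := by
  obtain ⟨f₀, hf₀⟩ := hUne
  obtain ⟨g₁₀, hg₁₀⟩ := hU₁ne
  obtain ⟨g₂₀, hg₂₀⟩ := hU₂ne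
  obtain ⟨r, hr, hball⟩ := Metric.isOpen_iff.1 hU f₀ hf₀
  obtain ⟨r₁, hr₁, hball₁⟩ := Metric.isOpen_iff.1 hU₁ g₁₀ hg₁₀
  obtain ⟨r₂, hr₂, hball₂⟩ := Metric.isOpen_iff.1 hU₂ g₂₀ hg₂₀
  obtain ⟨f, sf, hfsupp, hff₀⟩ := approx_fin hp0 hlam hmem hnorm hsurj f₀
    (by positivity : (0:ℝ) < r/2)
  obtain ⟨g₁, s₁, hg₁supp, hg₁d⟩ := approx_fin hp0 hlam hmem hnorm hsurj g₁₀
    (by positivity : (0:ℝ) < r₁/4)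
  obtain ⟨g₂, s₂, hg₂supp, hg₂d⟩ := approx_fin hp0 hlam hmem hnorm hsurj g₂₀
    (by positivity : (0:ℝ) < r₂/4)
  set δ : ℝ := min r (min r₁ r₂) / 8 with hδdef
  have hδ : 0 < δ := by
    have : 0 < min r (min r₁ r₂) := lt_min hr (lt_min hr₁ hr₂)
    positivity
  have hδr : δ ≤ r / 8 := by
    rw [hδdef]; gcongr; exact min_le_left _ _
  have hδr₁ : δ ≤ r₁ / 8 := by
    rw [hδdef]; gcongr; exact (min_le_right _ _).trans (min_le_left _ _)
  have hδr₂ : δ ≤ r₂ / 8 := by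
    rw [hδdef]; gcongr; exact (min_le_right _ _).trans (min_le_right _ _)
  have hδp : 0 < δ ^ p := Real.rpow_pos_of_pos hδ p
  -- six sums tend to zero
  have hsum : ∀ (s : Finset V) (g : V → ℂ) (q : ℕ → V → ℝ),
      (∀ w, Tendsto (fun k => q k w) atTop (𝓝 0)) →
      Tendsto (fun k => ∑ w ∈ s, ‖g w‖ ^ p * q k w) atTop (𝓝 0) := by
    intro s g q hq
    have : Tendsto (fun k => ∑ w ∈ s, ‖g w‖ ^ p * q k w) atTop
        (𝓝 (∑ w ∈ s, ‖g w‖ ^ p * 0)) := by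
      apply tendsto_finset_sum
      intro w _
      exact Tendsto.const_mul _ (hq w)
    simpa using this
  have hA1 := hsum s₁ (J g₁) (fun k w => lam (par^[n k] w)) (fun w => (hconv w).1)
  have hA2 := hsum s₂ (J g₂) (fun k w => lam (par^[4 * n k] w)) (fun w => (hconv w).2.1)
  have hC1 := hsum s₂ (J g₂) (fun k w => lam (par^[3 * n k] w)) (fun w => (hconv w).2.2.1)
  have hB1 := hsum sf (J f) (fun k w => chiWeight par lam (n k) w)
    (fun w => (hconv w).2.2.2.1)
  have hB2 := hsum sf (J f) (fun k w => chiWeight par lam (4 * n k) w)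
    (fun w => (hconv w).2.2.2.2.1)
  have hC2 := hsum s₁ (J g₁) (fun k w => chiWeight par lam (3 * n k) w)
    (fun w => (hconv w).2.2.2.2.2)
  have hev : ∀ᶠ k in atTop,
      (∑ w ∈ s₁, ‖J g₁ w‖ ^ p * lam (par^[n k] w)) ≤ δ ^ p ∧
      (∑ w ∈ s₂, ‖J g₂ w‖ ^ p * lam (par^[4 * n k] w)) ≤ δ ^ p ∧
      (∑ w ∈ s₂, ‖J g₂ w‖ ^ p * lam (par^[3 * n k] w)) ≤ δ ^ p ∧
      (∑ w ∈ sf, ‖J f w‖ ^ p * chiWeight par lam (n k) w) ≤ δ ^ p ∧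
      (∑ w ∈ sf, ‖J f w‖ ^ p * chiWeight par lam (4 * n k) w) ≤ δ ^ p ∧
      (∑ w ∈ s₁, ‖J g₁ w‖ ^ p * chiWeight par lam (3 * n k) w) ≤ δ ^ p := by
    have h1 := hA1.eventually_le_const hδp
    have h2 := hA2.eventually_le_const hδp
    have h3 := hC1.eventually_le_const hδp
    have h4 := hB1.eventually_le_const hδp
    have h5 := hB2.eventually_le_const hδp
    have h6 := hC2.eventually_le_const hδp
    filter_upwards [h1, h2, h3, h4, h5, h6] with k k1 k2 k3 k4 k5 k6
    exact ⟨k1, k2, k3, k4, k5, k6⟩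
  obtain ⟨k, hA1k, hA2k, hC1k, hB1k, hB2k, hC2k⟩ := hev.exists
  set m : ℕ := n k with hm
  -- build the vector z
  obtain ⟨z₁, hz₁⟩ := hsurj (pull par m (J g₁))
    (summable_of_fin_supp' hp0 (s := s₁.image (par^[m])) (pull_supp hg₁supp m))
  obtain ⟨z₂, hz₂⟩ := hsurj (pull par (4 * m) (J g₂))
    (summable_of_fin_supp' hp0 (s := s₂.image (par^[4 * m])) (pull_supp hg₂supp (4 * m)))
  set z : X := f + z₁ + z₂ with hz
  -- norms of the pieces
  have hnz₁ : ‖z₁‖ ≤ δ := by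
    apply rpow_le_reflect hp0 (norm_nonneg _) hδ.le
    rw [norm_rpow hp0 hlam hnorm]
    simp only [hz₁]
    rw [pull_tsum hpar hp0 hg₁supp m]
    exact hA1k
  have hnz₂ : ‖z₂‖ ≤ δ := by
    apply rpow_le_reflect hp0 (norm_nonneg _) hδ.le
    rw [norm_rpow hp0 hlam hnorm]
    simp only [hz₂]
    rw [pull_tsum hpar hp0 hg₂supp (4 * m)]
    exact hA2k
  -- operator identities
  have hid₁ : (S₁ ^ m) z₁ = g₁ := by
    apply hJ
    funext u
    rw [coordS1 hS₁, hz₁, pull_apply hpar]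
  have hid₂ : ((S₂ ^ 2) ^ m) z₂ = g₂ := by
    apply hJ
    funext u
    rw [coordS4 hS₂, hz₂, pull_apply hpar]
  have hid₃ : J ((S₁ ^ m) z₂) = pull par (3 * m) (J g₂) := by
    funext u
    rw [coordS1 hS₁, hz₂, pull_shift hpar]
  have hid₄ : J (((S₂ ^ 2) ^ m) z₁) = fun u => J g₁ (par^[3 * m] u) := by
    funext u
    rw [coordS4 hS₂, hz₁, pull_shift4 hpar]
  have hnS₁f : ‖(S₁ ^ m) f‖ ≤ δ := by
    apply rpow_le_reflect hp0 (norm_nonneg _) hδ.le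
    rw [norm_rpow hp0 hlam hnorm]
    calc ∑' v, ‖J ((S₁ ^ m) f) v‖ ^ p * lam v
        = ∑' v, ‖J f (par^[m] v)‖ ^ p * lam v := by
          congr 1; funext v; rw [coordS1 hS₁]
      _ ≤ ∑ w ∈ sf, ‖J f w‖ ^ p * chiWeight par lam m w :=
          comp_tsum_le hpar hp0 hlam hfsupp m
      _ ≤ δ ^ p := hB1k
  have hnS₄f : ‖((S₂ ^ 2) ^ m) f‖ ≤ δ := by
    apply rpow_le_reflect hp0 (norm_nonneg _) hδ.le
    rw [norm_rpow hp0 hlam hnorm]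
    calc ∑' v, ‖J (((S₂ ^ 2) ^ m) f) v‖ ^ p * lam v
        = ∑' v, ‖J f (par^[4 * m] v)‖ ^ p * lam v := by
          congr 1; funext v; rw [coordS4 hS₂]
      _ ≤ ∑ w ∈ sf, ‖J f w‖ ^ p * chiWeight par lam (4 * m) w :=
          comp_tsum_le hpar hp0 hlam hfsupp (4 * m)
      _ ≤ δ ^ p := hB2k
  have hnS₁z₂ : ‖(S₁ ^ m) z₂‖ ≤ δ := by
    apply rpow_le_reflect hp0 (norm_nonneg _) hδ.le
    rw [norm_rpow hp0 hlam hnorm]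
    simp only [hid₃]
    rw [pull_tsum hpar hp0 hg₂supp (3 * m)]
    exact hC1k
  have hnS₄z₁ : ‖((S₂ ^ 2) ^ m) z₁‖ ≤ δ := by
    apply rpow_le_reflect hp0 (norm_nonneg _) hδ.le
    rw [norm_rpow hp0 hlam hnorm]
    simp only [hid₄]
    calc ∑' v, ‖J g₁ (par^[3 * m] v)‖ ^ p * lam v
        ≤ ∑ w ∈ s₁, ‖J g₁ w‖ ^ p * chiWeight par lam (3 * m) w :=
          comp_tsum_le hpar hp0 hlam hg₁supp (3 * m)
      _ ≤ δ ^ p := hC2k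
  refine ⟨z, m, ?_, ?_, ?_⟩
  · apply hball
    rw [Metric.mem_ball, dist_eq_norm]
    have : z - f₀ = (f - f₀) + z₁ + z₂ := by rw [hz]; abel
    calc ‖z - f₀‖ ≤ ‖f - f₀‖ + ‖z₁‖ + ‖z₂‖ := by
          rw [this]; exact (norm_add_le _ _).trans (by
            have := norm_add_le (f - f₀) z₁
            linarith [norm_add_le ((f - f₀) + z₁) z₂, norm_add_le (f - f₀) z₁])
      _ < r/2 + r/8 + r/8 := by
          rw [norm_sub_rev] at hff₀
          apply add_lt_add_of_lt_of_le (add_lt_add_of_lt_of_le hff₀ (hnz₁.trans hδr))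
            (hnz₂.trans hδr)
      _ < r := by linarith
  · apply hball₁
    rw [Metric.mem_ball, dist_eq_norm]
    have hzval : (S₁ ^ m) z = (S₁ ^ m) f + g₁ + (S₁ ^ m) z₂ := by
      rw [hz, map_add, map_add, hid₁]
    have : (S₁ ^ m) z - g₁₀ = (g₁ - g₁₀) + (S₁ ^ m) f + (S₁ ^ m) z₂ := by
      rw [hzval]; abel
    calc ‖(S₁ ^ m) z - g₁₀‖ ≤ ‖g₁ - g₁₀‖ + ‖(S₁ ^ m) f‖ + ‖(S₁ ^ m) z₂‖ := by
          rw [this]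
          linarith [norm_add_le ((g₁ - g₁₀) + (S₁ ^ m) f) ((S₁ ^ m) z₂),
            norm_add_le (g₁ - g₁₀) ((S₁ ^ m) f)]
      _ < r₁/4 + r₁/8 + r₁/8 := by
          rw [norm_sub_rev] at hg₁d
          apply add_lt_add_of_lt_of_le (add_lt_add_of_lt_of_le hg₁d (hnS₁f.trans hδr₁))
            (hnS₁z₂.trans hδr₁)
      _ < r₁ := by linarith
  · apply hball₂
    rw [Metric.mem_ball, dist_eq_norm]
    have hzval : ((S₂ ^ 2) ^ m) z = ((S₂ ^ 2) ^ m) f + ((S₂ ^ 2) ^ m) z₁ + g₂ := by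
      rw [hz, map_add, map_add, hid₂]
    have : ((S₂ ^ 2) ^ m) z - g₂₀ = (g₂ - g₂₀) + ((S₂ ^ 2) ^ m) f + ((S₂ ^ 2) ^ m) z₁ := by
      rw [hzval]; abel
    calc ‖((S₂ ^ 2) ^ m) z - g₂₀‖
        ≤ ‖g₂ - g₂₀‖ + ‖((S₂ ^ 2) ^ m) f‖ + ‖((S₂ ^ 2) ^ m) z₁‖ := by
          rw [this]
          linarith [norm_add_le ((g₂ - g₂₀) + ((S₂ ^ 2) ^ m) f) (((S₂ ^ 2) ^ m) z₁),
            norm_add_le (g₂ - g₂₀) (((S₂ ^ 2) ^ m) f)]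
      _ < r₂/4 + r₂/8 + r₂/8 := by
          rw [norm_sub_rev] at hg₂d
          apply add_lt_add_of_lt_of_le (add_lt_add_of_lt_of_le hg₂d (hnS₄f.trans hδr₂))
            (hnS₄z₁.trans hδr₂)
      _ < r₂ := by linarith
end transit
section suff
variable {V : Type*} {par : V → V} {p : ℝ} {lam : V → ℝ}
variable {X : Type*} [NormedAddCommGroup X] [NormedSpace ℂ X] [CompleteSpace X]
variable {J : X →ₗ[ℂ] (V → ℂ)} {S₁ S₂ : X →L[ℂ] X}

lemma sufficiency [Countable V] (hpar : Function.Injective par) (hp0 : 0 < p)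
    (hlam : ∀ v, 0 < lam v)
    (hJ : Function.Injective J)
    (hmem : ∀ x : X, Summable fun v => ‖J x v‖ ^ p * lam v)
    (hnorm : ∀ x : X, ‖x‖ = (∑' v, ‖J x v‖ ^ p * lam v) ^ (1 / p))
    (hsurj : ∀ g : V → ℂ, (Summable fun v => ‖g v‖ ^ p * lam v) → ∃ x : X, J x = g)
    (hS₁ : ∀ (x : X) (v : V), J (S₁ x) v = J x (par v))
    (hS₂ : ∀ (x : X) (v : V), J (S₂ x) v = J x (par (par v)))
    (n : ℕ → ℕ)
    (hconv : ∀ v : V,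
        Tendsto (fun k => lam (par^[n k] v)) atTop (𝓝 0) ∧
        Tendsto (fun k => lam (par^[4 * n k] v)) atTop (𝓝 0) ∧
        Tendsto (fun k => lam (par^[3 * n k] v)) atTop (𝓝 0) ∧
        Tendsto (fun k => chiWeight par lam (n k) v) atTop (𝓝 0) ∧
        Tendsto (fun k => chiWeight par lam (4 * n k) v) atTop (𝓝 0) ∧
        Tendsto (fun k => chiWeight par lam (3 * n k) v) atTop (𝓝 0)) :
    Dense {x : X | Dense (Set.range fun m : ℕ => ((S₁ ^ m) x, ((S₂ ^ 2) ^ m) x))} := by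
  haveI hsep : TopologicalSpace.SeparableSpace X := separableX hp0 hlam hmem hnorm hsurj
  haveI : SecondCountableTopology X := UniformSpace.secondCountable_of_separable X
  set cB := TopologicalSpace.countableBasis X with hcB
  set s : Set (Set X × Set X) :=
    {q | q.1 ∈ cB ∧ q.2 ∈ cB ∧ q.1.Nonempty ∧ q.2.Nonempty} with hs
  have hscnt : s.Countable := by
    apply Set.Countable.mono _ (Set.Countable.prod
      (TopologicalSpace.countable_countableBasis X) (TopologicalSpace.countable_countableBasis X))
    intro q hq
    exact ⟨hq.1, hq.2.1⟩
  haveI := hscnt.to_subtype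
  set F : ↥s → Set X := fun q =>
    ⋃ m : ℕ, (⇑(S₁ ^ m) ⁻¹' (q : Set X × Set X).1) ∩ (⇑((S₂ ^ 2) ^ m) ⁻¹' (q : Set X × Set X).2)
    with hF
  have hFopen : ∀ q, IsOpen (F q) := by
    intro q
    apply isOpen_iUnion
    intro m
    exact ((TopologicalSpace.isOpen_of_mem_countableBasis q.2.1).preimage
        (S₁ ^ m).continuous).inter
      ((TopologicalSpace.isOpen_of_mem_countableBasis q.2.2.1).preimage
        ((S₂ ^ 2) ^ m).continuous)
  have hFdense : ∀ q, Dense (F q) := by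
    intro q
    rw [dense_iff_inter_open]
    intro U hU hUne
    obtain ⟨z, m, hzU, hz1, hz2⟩ := transit hpar hp0 hlam hJ hmem hnorm hsurj hS₁ hS₂ n hconv
      hU (TopologicalSpace.isOpen_of_mem_countableBasis q.2.1)
      (TopologicalSpace.isOpen_of_mem_countableBasis q.2.2.1)
      hUne q.2.2.2.1 q.2.2.2.2
    exact ⟨z, hzU, Set.mem_iUnion.2 ⟨m, hz1, hz2⟩⟩
  have hdense : Dense (⋂ q, F q) := dense_iInter_of_isOpen hFopen hFdense
  apply hdense.mono
  intro x hx
  simp only [Set.mem_iInter] at hx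
  show Dense (Set.range fun m : ℕ => ((S₁ ^ m) x, ((S₂ ^ 2) ^ m) x))
  rw [((TopologicalSpace.isBasis_countableBasis X).prod
    (TopologicalSpace.isBasis_countableBasis X)).dense_iff]
  rintro o ho hone
  obtain ⟨B₁, hB₁, B₂, hB₂, rfl⟩ := ho
  obtain ⟨⟨a, b⟩, hab⟩ := hone
  have hB₁ne : B₁.Nonempty := ⟨a, hab.1⟩
  have hB₂ne : B₂.Nonempty := ⟨b, hab.2⟩
  have hq : ((B₁, B₂) : Set X × Set X) ∈ s := ⟨hB₁, hB₂, hB₁ne, hB₂ne⟩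
  have := hx ⟨(B₁, B₂), hq⟩
  rw [hF, Set.mem_iUnion] at this
  obtain ⟨m, hm1, hm2⟩ := this
  exact ⟨((S₁ ^ m) x, ((S₂ ^ 2) ^ m) x), ⟨hm1, hm2⟩, Set.mem_range_self m⟩
end suff
section nec1
variable {X : Type*} [NormedAddCommGroup X] [NormedSpace ℂ X]

lemma open_prod_infinite {W : Set (X × X)} (hW : IsOpen W) (hWne : W.Nonempty)
    (u₀ : X) (hu₀ : u₀ ≠ 0) : W.Infinite := by
  obtain ⟨⟨a, b⟩, hab⟩ := hWne
  obtain ⟨r, hr, hball⟩ := Metric.isOpen_iff.1 hW (a, b) hab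
  have hnu : (0:ℝ) < ‖u₀‖ := norm_pos_iff.2 hu₀
  set ε₀ : ℝ := r / ‖u₀‖ with hε₀
  have hε₀pos : 0 < ε₀ := by positivity
  apply Set.infinite_of_injOn_mapsTo (s := Set.Ioo (0:ℝ) ε₀)
    (f := fun t => (a + t • u₀, b))
  · intro t ht t' ht' h
    have : t • u₀ = t' • u₀ := by
      have := congrArg Prod.fst h
      simpa using this
    have h2 : (t - t') • u₀ = 0 := by rw [sub_smul, this, sub_self]
    rcases smul_eq_zero.1 h2 with h3 | h3
    · linarith [sub_eq_zero.1 (by exact_mod_cast h3)]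
    · exact absurd h3 hu₀
  · intro t ht
    apply hball
    rw [Metric.mem_ball, Prod.dist_eq]
    have h1 : dist (a + t • u₀) a = |t| * ‖u₀‖ := by
      rw [dist_eq_norm, add_sub_cancel_left, norm_smul, Real.norm_eq_abs]
    have h2 : dist b b = 0 := dist_self b
    rw [h1, h2]
    have : |t| * ‖u₀‖ < r := by
      rw [abs_of_pos ht.1]
      calc t * ‖u₀‖ < ε₀ * ‖u₀‖ := by
            apply mul_lt_mul_of_pos_right ht.2 hnu
        _ = r := by rw [hε₀]; field_simp
    simp [this, hr]
  · rw [← Set.infinite_coe_iff]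
    exact Set.Ioo.infinite hε₀pos

lemma orbit_revisit {φ : ℕ → X × X} (hd : Dense (Set.range φ))
    {W : Set (X × X)} (hW : IsOpen W) (hWne : W.Nonempty)
    (u₀ : X) (hu₀ : u₀ ≠ 0) (N : ℕ) : ∃ m, N < m ∧ φ m ∈ W := by
  have hinf := open_prod_infinite hW hWne u₀ hu₀
  set P : Set (X × X) := φ '' {i | i ≤ N} with hP
  have hPfin : P.Finite := Set.Finite.image _ (Set.finite_Iic N)
  have hW' : IsOpen (W \ P) := hW.sdiff hPfin.isClosed
  have hW'ne : (W \ P).Nonempty := (hinf.diff hPfin).nonempty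
  obtain ⟨y, hy, hyW'⟩ := hd.exists_mem_open hW' hW'ne
  obtain ⟨m, rfl⟩ := hy
  refine ⟨m, ?_, hyW'.1⟩
  by_contra hm
  push_neg at hm
  exact hyW'.2 ⟨m, hm, rfl⟩
end nec1
section nec2
variable {V : Type*} {par : V → V} {p : ℝ} {lam : V → ℝ}
variable {X : Type*} [NormedAddCommGroup X] [NormedSpace ℂ X]
variable {J : X →ₗ[ℂ] (V → ℂ)} {S₁ S₂ : X →L[ℂ] X}

lemma necessity_step (hpar : Function.Injective par)
    (hper : ∀ v : V, ∀ M : ℕ, 1 ≤ M → par^[M] v ≠ v)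
    (hp0 : 0 < p) (hlam : ∀ v, 0 < lam v)
    (hmem : ∀ x : X, Summable fun v => ‖J x v‖ ^ p * lam v)
    (hnorm : ∀ x : X, ‖x‖ = (∑' v, ‖J x v‖ ^ p * lam v) ^ (1 / p))
    (hsurj : ∀ g : V → ℂ, (Summable fun v => ‖g v‖ ^ p * lam v) → ∃ x : X, J x = g)
    (hS₁ : ∀ (x : X) (v : V), J (S₁ x) v = J x (par v))
    (hS₂ : ∀ (x : X) (v : V), J (S₂ x) v = J x (par (par v)))
    (hdense : Dense {x : X | Dense (Set.range fun m : ℕ => ((S₁ ^ m) x, ((S₂ ^ 2) ^ m) x))})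
    (W : Finset V) (prev : ℕ) {c : ℝ} (hc : 0 < c) :
    ∃ m, prev < m ∧ ∀ w ∈ W,
      lam (par^[m] w) ≤ c ∧ lam (par^[4 * m] w) ≤ c ∧ lam (par^[3 * m] w) ≤ c ∧
      chiWeight par lam m w ≤ c ∧ chiWeight par lam (4 * m) w ≤ c ∧
      chiWeight par lam (3 * m) w ≤ c := by
  rcases W.eq_empty_or_nonempty with rfl | hWne
  · exact ⟨prev + 1, Nat.lt_succ_self prev, fun w hw => absurd hw (Finset.notMem_empty w)⟩
  -- choose ε
  set μ : ℝ := W.inf' hWne (fun w => lam w ^ (1/p) / 2) with hμ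
  have hμpos : 0 < μ := by
    rw [hμ, Finset.lt_inf'_iff]
    intro w _
    have := Real.rpow_pos_of_pos (hlam w) (1/p)
    positivity
  set ε : ℝ := min (c ^ (1/p) / 2) μ with hε
  have hεpos : 0 < ε := by
    apply lt_min _ hμpos
    have := Real.rpow_pos_of_pos hc (1/p)
    positivity
  have hεs : ∀ w ∈ W, ε ≤ lam w ^ (1/p) / 2 := fun w hw =>
    (min_le_right _ _).trans (Finset.inf'_le _ hw)
  have h2εc : (2 * ε) ^ p ≤ c := by
    have h1 : 2 * ε ≤ c ^ (1/p) := by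
      have := min_le_left (c ^ (1/p) / 2) μ
      have h2 : ε ≤ c ^ (1/p) / 2 := this
      linarith
    calc (2 * ε) ^ p ≤ (c ^ (1/p)) ^ p :=
          Real.rpow_le_rpow (by positivity) h1 hp0.le
      _ = c := by rw [← Real.rpow_mul hc.le, one_div_mul_cancel hp0.ne', Real.rpow_one]
  -- the indicator vector
  set χ : V → ℂ := fun v => if v ∈ W then (1:ℂ) else 0 with hχ
  obtain ⟨x₀, hx₀J⟩ := hsurj χ (summable_of_fin_supp' hp0 (s := W)
    (fun v hv => by simp [hχ, hv]))
  have hx₀ne : x₀ ≠ 0 := by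
    intro h
    obtain ⟨w, hw⟩ := hWne
    have h1 : J x₀ w = 1 := by rw [hx₀J]; simp [hχ, hw]
    rw [h, map_zero] at h1
    simpa using h1
  -- a d-hypercyclic vector near x₀
  obtain ⟨x, hxmem⟩ := dense_iff_inter_open.1 hdense (Metric.ball x₀ ε)
    Metric.isOpen_ball ⟨x₀, Metric.mem_ball_self hεpos⟩
  have hxball := hxmem.1
  have hxHC : Dense (Set.range fun m : ℕ => ((S₁ ^ m) x, ((S₂ ^ 2) ^ m) x)) := hxmem.2
  -- bad set of indices
  have hsub : ∀ (a : ℕ), 1 ≤ a → ∀ w w' : V, {m : ℕ | par^[a * m] w = w'}.Subsingleton := by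
    intro a ha w w' m hm m' hm'
    simp only [Set.mem_setOf_eq] at hm hm'
    have := iter_inj_of_aperiodic hpar hper w (hm.trans hm'.symm)
    exact Nat.eq_of_mul_eq_mul_left ha this
  set S : Set ℕ := ⋃ w ∈ (W : Set V), ⋃ w' ∈ (W : Set V),
      ({m : ℕ | par^[1 * m] w = w'} ∪ {m | par^[3 * m] w = w'} ∪ {m | par^[4 * m] w = w'})
    with hS
  have hSfin : S.Finite := by
    apply Set.Finite.biUnion W.finite_toSet
    intro w _
    apply Set.Finite.biUnion W.finite_toSet
    intro w' _
    exact (((hsub 1 le_rfl w w').finite.union (hsub 3 (by norm_num) w w').finite).union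
      (hsub 4 (by norm_num) w w').finite)
  obtain ⟨N, hN⟩ := hSfin.bddAbove
  rw [mem_upperBounds] at hN
  -- find a good time m
  obtain ⟨m, hmgt, hmW'⟩ := orbit_revisit hxHC
    (Metric.isOpen_ball.prod Metric.isOpen_ball)
    ⟨(x₀, x₀), Metric.mem_ball_self hεpos, Metric.mem_ball_self hεpos⟩
    x₀ hx₀ne (max prev N)
  have hmprev : prev < m := lt_of_le_of_lt (le_max_left _ _) hmgt
  have hmS : ∀ {a : ℕ}, a = 1 ∨ a = 3 ∨ a = 4 → ∀ w ∈ W, ∀ w' ∈ W, par^[a * m] w ≠ w' := by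
    intro a ha w hw w' hw' heq
    have hmem : m ∈ S := by
      rw [hS]
      refine Set.mem_biUnion hw (Set.mem_biUnion hw' ?_)
      rcases ha with rfl | rfl | rfl
      · exact Or.inl (Or.inl heq)
      · exact Or.inl (Or.inr heq)
      · exact Or.inr heq
    exact absurd (hN m hmem) (not_le.2 (lt_of_le_of_lt (le_max_right prev N) hmgt))
  -- the three approximation facts
  have hx0 : ‖x - x₀‖ ≤ ε := by
    rw [← dist_eq_norm]
    exact (Metric.mem_ball.1 hxball).le
  have hx1 : ‖(S₁ ^ m) x - x₀‖ ≤ ε := by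
    rw [← dist_eq_norm]
    exact (Metric.mem_ball.1 hmW'.1).le
  have hx2 : ‖((S₂ ^ 2) ^ m) x - x₀‖ ≤ ε := by
    rw [← dist_eq_norm]
    exact (Metric.mem_ball.1 hmW'.2).le
  have d0 : ∀ u, ‖J x u - χ u‖ ^ p * lam u ≤ ε ^ p := by
    intro u
    have := coord_le hp0 hlam hmem hnorm hx0 u
    rwa [hx₀J] at this
  have d1 : ∀ u, ‖J x (par^[m] u) - χ u‖ ^ p * lam u ≤ ε ^ p := by
    intro u
    have := coord_le hp0 hlam hmem hnorm hx1 u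
    rwa [hx₀J, coordS1 hS₁] at this
  have d2 : ∀ u, ‖J x (par^[4 * m] u) - χ u‖ ^ p * lam u ≤ ε ^ p := by
    intro u
    have := coord_le hp0 hlam hmem hnorm hx2 u
    rwa [hx₀J, coordS4 hS₂] at this
  have hχ1 : ∀ w ∈ W, χ w = 1 := fun w hw => by simp [hχ, hw]
  have hχ0 : ∀ u, u ∉ W → χ u = 0 := fun u hu => by simp [hχ, hu]
  refine ⟨m, hmprev, fun w hw => ?_⟩
  have hd1w : ‖J x (par^[m] w) - 1‖ ^ p * lam w ≤ ε ^ p := by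
    have := d1 w; rwa [hχ1 w hw] at this
  have hd2w : ‖J x (par^[4 * m] w) - 1‖ ^ p * lam w ≤ ε ^ p := by
    have := d2 w; rwa [hχ1 w hw] at this
  have hd0w : ‖J x w - 1‖ ^ p * lam w ≤ ε ^ p := by
    have := d0 w; rwa [hχ1 w hw] at this
  refine ⟨?_, ?_, ?_, ?_, ?_, ?_⟩
  · -- lam (par^[m] w)
    have hnot : par^[m] w ∉ W := fun hmem =>
      hmS (Or.inl rfl) w hw _ hmem (by rw [one_mul])
    have h2 : ‖J x (par^[m] w)‖ ^ p * lam (par^[m] w) ≤ ε ^ p := by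
      have := d0 (par^[m] w); rwa [hχ0 _ hnot, sub_zero] at this
    exact (key_small hp0 (hlam w) hεpos (hεs w hw) hd1w h2).trans h2εc
  · -- lam (par^[4m] w)
    have hnot : par^[4 * m] w ∉ W := fun hmem => hmS (Or.inr (Or.inr rfl)) w hw _ hmem rfl
    have h2 : ‖J x (par^[4 * m] w)‖ ^ p * lam (par^[4 * m] w) ≤ ε ^ p := by
      have := d0 (par^[4 * m] w); rwa [hχ0 _ hnot, sub_zero] at this
    exact (key_small hp0 (hlam w) hεpos (hεs w hw) hd2w h2).trans h2εc
  · -- lam (par^[3m] w)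
    have hnot : par^[3 * m] w ∉ W := fun hmem => hmS (Or.inr (Or.inl rfl)) w hw _ hmem rfl
    have hiter : par^[m] (par^[3 * m] w) = par^[4 * m] w := by
      rw [← Function.iterate_add_apply]; congr 1; ring
    have h2 : ‖J x (par^[4 * m] w)‖ ^ p * lam (par^[3 * m] w) ≤ ε ^ p := by
      have := d1 (par^[3 * m] w)
      rwa [hiter, hχ0 _ hnot, sub_zero] at this
    exact (key_small hp0 (hlam w) hεpos (hεs w hw) hd2w h2).trans h2εc
  · -- chiWeight m w
    by_cases hex : ∃ u, par^[m] u = w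
    · obtain ⟨u, hu⟩ := hex
      rw [chiWeight_eq hpar hu]
      have hnot : u ∉ W := fun hmem => hmS (Or.inl rfl) u hmem w hw (by rw [one_mul]; exact hu)
      have h2 : ‖J x w‖ ^ p * lam u ≤ ε ^ p := by
        have := d1 u
        rwa [hu, hχ0 _ hnot, sub_zero] at this
      exact (key_small hp0 (hlam w) hεpos (hεs w hw) hd0w h2).trans h2εc
    · rw [chiWeight, dif_neg hex]; exact hc.le
  · -- chiWeight (4m) w
    by_cases hex : ∃ u, par^[4 * m] u = w
    · obtain ⟨u, hu⟩ := hex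
      rw [chiWeight_eq hpar hu]
      have hnot : u ∉ W := fun hmem => hmS (Or.inr (Or.inr rfl)) u hmem w hw hu
      have h2 : ‖J x w‖ ^ p * lam u ≤ ε ^ p := by
        have := d2 u
        rwa [hu, hχ0 _ hnot, sub_zero] at this
      exact (key_small hp0 (hlam w) hεpos (hεs w hw) hd0w h2).trans h2εc
    · rw [chiWeight, dif_neg hex]; exact hc.le
  · -- chiWeight (3m) w
    by_cases hex : ∃ u, par^[3 * m] u = w
    · obtain ⟨u, hu⟩ := hex
      rw [chiWeight_eq hpar hu]
      have hnot : u ∉ W := fun hmem => hmS (Or.inr (Or.inl rfl)) u hmem w hw hu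
      have hiter : par^[4 * m] u = par^[m] w := by
        rw [show 4 * m = m + 3 * m by ring, Function.iterate_add_apply, hu]
      have h2 : ‖J x (par^[m] w)‖ ^ p * lam u ≤ ε ^ p := by
        have := d2 u
        rwa [hiter, hχ0 _ hnot, sub_zero] at this
      exact (key_small hp0 (hlam w) hεpos (hεs w hw) hd1w h2).trans h2εc
    · rw [chiWeight, dif_neg hex]; exact hc.le
end nec2
section nec3
variable {V : Type*} {par : V → V} {p : ℝ} {lam : V → ℝ}
variable {X : Type*} [NormedAddCommGroup X] [NormedSpace ℂ X]
variable {J : X →ₗ[ℂ] (V → ℂ)} {S₁ S₂ : X →L[ℂ] X}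

lemma necessity [Countable V] [Infinite V] (hpar : Function.Injective par)
    (hper : ∀ v : V, ∀ M : ℕ, 1 ≤ M → par^[M] v ≠ v)
    (hp0 : 0 < p) (hlam : ∀ v, 0 < lam v)
    (hmem : ∀ x : X, Summable fun v => ‖J x v‖ ^ p * lam v)
    (hnorm : ∀ x : X, ‖x‖ = (∑' v, ‖J x v‖ ^ p * lam v) ^ (1 / p))
    (hsurj : ∀ g : V → ℂ, (Summable fun v => ‖g v‖ ^ p * lam v) → ∃ x : X, J x = g)
    (hS₁ : ∀ (x : X) (v : V), J (S₁ x) v = J x (par v))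
    (hS₂ : ∀ (x : X) (v : V), J (S₂ x) v = J x (par (par v)))
    (hdense : Dense {x : X | Dense (Set.range fun m : ℕ => ((S₁ ^ m) x, ((S₂ ^ 2) ^ m) x))}) :
    ∃ n : ℕ → ℕ, StrictMono n ∧ (∀ k, 1 ≤ n k) ∧
      ∀ v : V,
        Tendsto (fun k => lam (par^[n k] v)) atTop (𝓝 0) ∧
        Tendsto (fun k => lam (par^[4 * n k] v)) atTop (𝓝 0) ∧
        Tendsto (fun k => lam (par^[3 * n k] v)) atTop (𝓝 0) ∧
        Tendsto (fun k => chiWeight par lam (n k) v) atTop (𝓝 0) ∧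
        Tendsto (fun k => chiWeight par lam (4 * n k) v) atTop (𝓝 0) ∧
        Tendsto (fun k => chiWeight par lam (3 * n k) v) atTop (𝓝 0) := by
  obtain ⟨eV, heV⟩ := exists_surjective_nat V
  set Wk : ℕ → Finset V := fun k => (Finset.range (k+1)).image eV with hWk
  have hstep : ∀ (k prev : ℕ), ∃ m, prev < m ∧ ∀ w ∈ Wk k,
      lam (par^[m] w) ≤ 1/((k:ℝ)+1) ∧ lam (par^[4 * m] w) ≤ 1/((k:ℝ)+1) ∧
      lam (par^[3 * m] w) ≤ 1/((k:ℝ)+1) ∧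
      chiWeight par lam m w ≤ 1/((k:ℝ)+1) ∧ chiWeight par lam (4 * m) w ≤ 1/((k:ℝ)+1) ∧
      chiWeight par lam (3 * m) w ≤ 1/((k:ℝ)+1) := by
    intro k prev
    exact necessity_step hpar hper hp0 hlam hmem hnorm hsurj hS₁ hS₂ hdense (Wk k) prev
      (by positivity)
  set f : ℕ → ℕ → ℕ := fun k prev => (hstep k prev).choose with hf
  set ns : ℕ → ℕ := fun k => Nat.rec (f 0 0) (fun k ih => f (k+1) ih) k with hns
  have hns0 : ns 0 = f 0 0 := rfl
  have hnsS : ∀ k, ns (k+1) = f (k+1) (ns k) := fun k => rfl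
  have hmono : StrictMono ns := by
    apply strictMono_nat_of_lt_succ
    intro k
    rw [hnsS k]
    exact (hstep (k+1) (ns k)).choose_spec.1
  have h1 : ∀ k, 1 ≤ ns k := by
    intro k
    have h0 : 1 ≤ ns 0 := by
      rw [hns0]
      exact (hstep 0 0).choose_spec.1
    exact h0.trans (hmono.monotone (Nat.zero_le k))
  have hP : ∀ k, ∀ w ∈ Wk k,
      lam (par^[ns k] w) ≤ 1/((k:ℝ)+1) ∧ lam (par^[4 * ns k] w) ≤ 1/((k:ℝ)+1) ∧
      lam (par^[3 * ns k] w) ≤ 1/((k:ℝ)+1) ∧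
      chiWeight par lam (ns k) w ≤ 1/((k:ℝ)+1) ∧
      chiWeight par lam (4 * ns k) w ≤ 1/((k:ℝ)+1) ∧
      chiWeight par lam (3 * ns k) w ≤ 1/((k:ℝ)+1) := by
    intro k
    cases k with
    | zero => exact (hstep 0 0).choose_spec.2
    | succ k => exact (hstep (k+1) (ns k)).choose_spec.2
  have hsq : ∀ (q : ℕ → ℝ), (∀ k, 0 ≤ q k) → (∀ᶠ k in atTop, q k ≤ 1/((k:ℝ)+1)) →
      Tendsto q atTop (𝓝 0) := by
    intro q hq he
    exact tendsto_of_tendsto_of_tendsto_of_le_of_le' tendsto_const_nhds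
      tendsto_one_div_add_atTop_nhds_zero_nat (Eventually.of_forall hq) he
  refine ⟨ns, hmono, h1, fun v => ?_⟩
  obtain ⟨i, rfl⟩ := heV v
  have hmem' : ∀ k, i ≤ k → eV i ∈ Wk k := by
    intro k hk
    exact Finset.mem_image.2 ⟨i, Finset.mem_range.2 (by omega), rfl⟩
  have hev : ∀ᶠ k in atTop, eV i ∈ Wk k := by
    filter_upwards [eventually_ge_atTop i] with k hk using hmem' k hk
  refine ⟨?_, ?_, ?_, ?_, ?_, ?_⟩
  · exact hsq _ (fun k => (hlam _).le)
      (by filter_upwards [hev] with k hk using (hP k _ hk).1)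
  · exact hsq _ (fun k => (hlam _).le)
      (by filter_upwards [hev] with k hk using (hP k _ hk).2.1)
  · exact hsq _ (fun k => (hlam _).le)
      (by filter_upwards [hev] with k hk using (hP k _ hk).2.2.1)
  · exact hsq _ (fun k => chiWeight_nonneg hlam _ _)
      (by filter_upwards [hev] with k hk using (hP k _ hk).2.2.2.1)
  · exact hsq _ (fun k => chiWeight_nonneg hlam _ _)
      (by filter_upwards [hev] with k hk using (hP k _ hk).2.2.2.2.1)
  · exact hsq _ (fun k => chiWeight_nonneg hlam _ _)
      (by filter_upwards [hev] with k hk using (hP k _ hk).2.2.2.2.2)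
end nec3

theorem stmt13
    {V : Type*} [Countable V] [Infinite V]
    (par : V → V) (hpar : Function.Injective par)
    (hper : ∀ v : V, ∀ M : ℕ, 1 ≤ M → par^[M] v ≠ v)
    (p : ℝ) (hp : 1 ≤ p)
    (lam : V → ℝ) (hlam : ∀ v, 0 < lam v)
    (hb1 : ∃ C : ℝ, ∀ v, lam v / lam (par v) ≤ C)
    (hb2 : ∃ C : ℝ, ∀ v, lam v / lam (par (par v)) ≤ C)
    {X : Type*} [NormedAddCommGroup X] [NormedSpace ℂ X] [CompleteSpace X]
    (J : X →ₗ[ℂ] (V → ℂ)) (hJ : Function.Injective J)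
    (hmem : ∀ x : X, Summable fun v => ‖J x v‖ ^ p * lam v)
    (hnorm : ∀ x : X, ‖x‖ = (∑' v, ‖J x v‖ ^ p * lam v) ^ (1 / p))
    (hsurj : ∀ g : V → ℂ, (Summable fun v => ‖g v‖ ^ p * lam v) → ∃ x : X, J x = g)
    (S₁ S₂ : X →L[ℂ] X)
    (hS₁ : ∀ (x : X) (v : V), J (S₁ x) v = J x (par v))
    (hS₂ : ∀ (x : X) (v : V), J (S₂ x) v = J x (par (par v))) :
    Dense {x : X | Dense (Set.range fun n : ℕ => ((S₁ ^ n) x, ((S₂ ^ 2) ^ n) x))}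
      ↔
    ∃ n : ℕ → ℕ, StrictMono n ∧ (∀ k, 1 ≤ n k) ∧
      ∀ v : V,
        Tendsto (fun k => lam (par^[n k] v)) atTop (𝓝 0) ∧
        Tendsto (fun k => lam (par^[4 * n k] v)) atTop (𝓝 0) ∧
        Tendsto (fun k => lam (par^[3 * n k] v)) atTop (𝓝 0) ∧
        Tendsto (fun k => chiWeight par lam (n k) v) atTop (𝓝 0) ∧
        Tendsto (fun k => chiWeight par lam (4 * n k) v) atTop (𝓝 0) ∧
        Tendsto (fun k => chiWeight par lam (3 * n k) v) atTop (𝓝 0) := by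
  have hp0 : 0 < p := lt_of_lt_of_le one_pos hp
  constructor
  · intro hdense
    exact necessity hpar hper hp0 hlam hmem hnorm hsurj hS₁ hS₂ hdense
  · rintro ⟨n, hmono, h1, hconv⟩
    exact sufficiency hpar hp0 hlam hJ hmem hnorm hsurj hS₁ hS₂ n hconv
end

section
/- Let X be a separable infinite-dimensional complex Banach space, N ≥ 2, and let T₁, …, T_N be continuous linear operators on X. If T₁, …, T_N satisfy the d-Supercyclicity Criterion with respect to some strictly increasing sequence (n_k) of positive integers, then T₁, …, T_N have a dense set of d-supercyclic vectors, i.e. the set of x ∈ X such that {λ·(T₁^n x, …, T_N^n x) : λ ∈ ℂ, n ∈ ℕ} is dense in X^N is itself dense in X. -/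
open Filter Topology

/-- Continuous linear operators `T 0, …, T (N-1)` on `X` satisfy the d-Supercyclicity Criterion
with respect to the strictly increasing sequence `(n k)` of positive integers. -/
def DSupCriterionWrt {X : Type*} [NormedAddCommGroup X] [NormedSpace ℂ X]
    {N : ℕ} (T : Fin N → X →L[ℂ] X) (n : ℕ → ℕ) : Prop :=
  ∃ (X₀ : Set X) (Xs : Fin N → Set X) (S : Fin N → ℕ → X → X),
    Dense X₀ ∧ (∀ l, Dense (Xs l)) ∧
    (∀ l i : Fin N, ∀ x ∈ Xs i,
      Tendsto (fun k => ((T l) ^ (n k)) (S i k x) - (if i = l then x else 0)) atTop (𝓝 0)) ∧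
    (∀ l : Fin N, ∀ x ∈ X₀, ∀ y : Fin N → X, (∀ j, y j ∈ Xs j) →
      Tendsto (fun k => ‖((T l) ^ (n k)) x‖ * ‖∑ j : Fin N, S j k (y j)‖) atTop (𝓝 0))

private lemma dsup_dense_approx {X : Type*} [NormedAddCommGroup X] [NormedSpace ℂ X]
    {N : ℕ} (T : Fin N → X →L[ℂ] X) (n : ℕ → ℕ)
    (X₀ : Set X) (Xs : Fin N → Set X) (S : Fin N → ℕ → X → X)
    (hX₀ : Dense X₀) (hXs : ∀ l, Dense (Xs l))
    (h1 : ∀ l i : Fin N, ∀ x ∈ Xs i,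
      Tendsto (fun k => ((T l) ^ (n k)) (S i k x) - (if i = l then x else 0)) atTop (𝓝 0))
    (h2 : ∀ l : Fin N, ∀ x ∈ X₀, ∀ y : Fin N → X, (∀ j, y j ∈ Xs j) →
      Tendsto (fun k => ‖((T l) ^ (n k)) x‖ * ‖∑ j : Fin N, S j k (y j)‖) atTop (𝓝 0))
    (u : Fin N → X) {ε : ℝ} (hε : 0 < ε) :
    Dense (⋃ p : ℂ × ℕ, {x : X | dist (fun l => p.1 • (((T l) ^ p.2) x)) u < ε}) := by
  rw [Metric.dense_iff]
  intro x₀ δ hδ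
  obtain ⟨x, hx, hxd⟩ := hX₀.exists_dist_lt x₀ (by linarith : (0:ℝ) < δ/2)
  have hy' : ∀ j, ∃ z, z ∈ Xs j ∧ dist z (u j) < ε/2 := by
    intro j
    obtain ⟨z, hz1, hz2⟩ := (hXs j).exists_dist_lt (u j) (by linarith : (0:ℝ) < ε/2)
    exact ⟨z, hz1, by rwa [dist_comm]⟩
  choose y hy hyu using hy'
  set A : ℕ → ℝ := fun k => ∑ l, ‖((T l) ^ (n k)) x‖ with hA
  set B : ℕ → ℝ := fun k => ‖∑ j, S j k (y j)‖ with hB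
  have hA0 : ∀ k, 0 ≤ A k := fun k => Finset.sum_nonneg fun _ _ => norm_nonneg _
  have hB0 : ∀ k, 0 ≤ B k := fun k => norm_nonneg _
  have hAB : Tendsto (fun k => A k * B k) atTop (𝓝 0) := by
    have hsum : Tendsto (fun k => ∑ l : Fin N, ‖((T l) ^ (n k)) x‖ * B k) atTop
        (𝓝 (∑ _l : Fin N, (0:ℝ))) :=
      tendsto_finset_sum _ fun l _ => h2 l x hx y hy
    simp only [Finset.sum_const_zero] at hsum
    have heq : (fun k => A k * B k) = fun k => ∑ l : Fin N, ‖((T l) ^ (n k)) x‖ * B k := by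
      funext k; simp only [hA, Finset.sum_mul]
    rw [heq]; exact hsum
  set c : ℕ → ℝ := fun k => ((k:ℝ)+1)⁻¹ * ((1 + A k)⁻¹ * (1 + B k)⁻¹) with hc
  have hApos : ∀ k, (0:ℝ) < 1 + A k := fun k => by have := hA0 k; linarith
  have hBpos' : ∀ k, (0:ℝ) < 1 + B k := fun k => by have := hB0 k; linarith
  have hc0 : ∀ k, 0 < c k := by
    intro k
    exact mul_pos (by positivity) (mul_pos (inv_pos.mpr (hApos k)) (inv_pos.mpr (hBpos' k)))
  have key : ∀ a b : ℝ, 0 ≤ a → 0 ≤ b → a * ((1+a)⁻¹ * (1+b)⁻¹) ≤ 1 := by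
    intro a b ha hb
    have h1 : (0:ℝ) < 1 + a := by linarith
    have h2 : (0:ℝ) < 1 + b := by linarith
    calc a * ((1+a)⁻¹ * (1+b)⁻¹) ≤ (1+a) * ((1+a)⁻¹ * (1+b)⁻¹) := by
          apply mul_le_mul_of_nonneg_right (by linarith) (by positivity)
      _ = (1+b)⁻¹ := by field_simp
      _ ≤ 1 := by rw [inv_le_one_iff₀]; right; linarith
  have hkey1 : ∀ a b : ℝ, 0 ≤ a → 0 ≤ b → (1+a)⁻¹ * (1+b)⁻¹ ≤ 1 := by
    intro a b ha hb
    have h1 : (0:ℝ) < 1 + a := by linarith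
    have h2 : (0:ℝ) < 1 + b := by linarith
    have e1 : (1+a)⁻¹ ≤ 1 := by rw [inv_le_one_iff₀]; right; linarith
    have e2 : (1+b)⁻¹ ≤ 1 := by rw [inv_le_one_iff₀]; right; linarith
    calc (1+a)⁻¹ * (1+b)⁻¹ ≤ 1 * 1 := by
          apply mul_le_mul e1 e2 (by positivity) (by norm_num)
      _ = 1 := by norm_num
  have hck : ∀ k, c k ≤ ((k:ℝ)+1)⁻¹ := by
    intro k
    calc c k = ((k:ℝ)+1)⁻¹ * ((1 + A k)⁻¹ * (1 + B k)⁻¹) := rfl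
      _ ≤ ((k:ℝ)+1)⁻¹ * 1 := by
          apply mul_le_mul_of_nonneg_left (hkey1 _ _ (hA0 k) (hB0 k)) (by positivity)
      _ = ((k:ℝ)+1)⁻¹ := by ring
  have hAc : ∀ k, A k * c k ≤ ((k:ℝ)+1)⁻¹ := by
    intro k
    calc A k * c k = ((k:ℝ)+1)⁻¹ * (A k * ((1 + A k)⁻¹ * (1 + B k)⁻¹)) := by
          simp only [hc]; ring
      _ ≤ ((k:ℝ)+1)⁻¹ * 1 := by
          apply mul_le_mul_of_nonneg_left (key _ _ (hA0 k) (hB0 k)) (by positivity)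
      _ = ((k:ℝ)+1)⁻¹ := by ring
  have hBc : ∀ k, B k * c k ≤ ((k:ℝ)+1)⁻¹ := by
    intro k
    calc B k * c k = ((k:ℝ)+1)⁻¹ * (B k * ((1 + B k)⁻¹ * (1 + A k)⁻¹)) := by
          simp only [hc]; ring
      _ ≤ ((k:ℝ)+1)⁻¹ * 1 := by
          apply mul_le_mul_of_nonneg_left (key _ _ (hB0 k) (hA0 k)) (by positivity)
      _ = ((k:ℝ)+1)⁻¹ := by ring
  have hcc : ∀ k, c k * c k ≤ ((k:ℝ)+1)⁻¹ := by
    intro k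
    have hc1 : c k ≤ 1 := by
      refine (hck k).trans ?_
      rw [inv_le_one_iff₀]; right
      have : (0:ℝ) ≤ (k:ℝ) := Nat.cast_nonneg k
      linarith
    calc c k * c k ≤ ((k:ℝ)+1)⁻¹ * 1 :=
          mul_le_mul (hck k) hc1 (hc0 k).le (by positivity)
      _ = ((k:ℝ)+1)⁻¹ := by ring
  have hto : ∀ f : ℕ → ℝ, (∀ k, 0 ≤ f k) → (∀ k, f k ≤ ((k:ℝ)+1)⁻¹) →
      Tendsto f atTop (𝓝 0) := by
    intro f h0 hle
    exact squeeze_zero h0 hle (by simpa [one_div] using tendsto_one_div_add_atTop_nhds_zero_nat (𝕜 := ℝ))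
  have hinner : Tendsto (fun k => (A k + c k) * (B k + c k)) atTop (𝓝 0) := by
    have h4 : Tendsto (fun k => A k * B k + (A k * c k + (B k * c k + c k * c k)))
        atTop (𝓝 0) := by
      have := hAB.add
        (((hto (fun k => A k * c k) (fun k => mul_nonneg (hA0 k) (hc0 k).le) hAc)).add
          (((hto (fun k => B k * c k) (fun k => mul_nonneg (hB0 k) (hc0 k).le) hBc)).add
            (hto (fun k => c k * c k) (fun k => mul_nonneg (hc0 k).le (hc0 k).le) hcc)))
      simpa using this
    have heq : (fun k => (A k + c k) * (B k + c k)) =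
        fun k => A k * B k + (A k * c k + (B k * c k + c k * c k)) := by
      funext k; ring
    rw [heq]; exact h4
  set sOf : ℕ → ℝ := fun k => Real.sqrt ((A k + c k) * (B k + c k)) with hsOf
  have hsTo : Tendsto sOf atTop (𝓝 0) := by simpa using hinner.sqrt
  set lam : ℕ → ℝ := fun k => Real.sqrt ((B k + c k) / (A k + c k)) with hlam
  have hAcpos : ∀ k, 0 < A k + c k := fun k => by have := hA0 k; have := hc0 k; linarith
  have hBcpos : ∀ k, 0 < B k + c k := fun k => by have := hB0 k; have := hc0 k; linarith
  have hlampos : ∀ k, 0 < lam k := fun k =>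
    Real.sqrt_pos.mpr (div_pos (hBcpos k) (hAcpos k))
  have hid1 : ∀ k, lam k * (A k + c k) = sOf k := by
    intro k
    rw [show sOf k = Real.sqrt ((A k + c k) * (B k + c k)) from rfl,
      show (A k + c k) * (B k + c k) = (B k + c k) / (A k + c k) * (A k + c k)^2 by
        field_simp,
      Real.sqrt_mul (by positivity), Real.sqrt_sq (hAcpos k).le]
  have hid2 : ∀ k, (lam k)⁻¹ * (B k + c k) = sOf k := by
    intro k
    have hli : (lam k)⁻¹ = Real.sqrt ((A k + c k) / (B k + c k)) := by
      rw [show lam k = Real.sqrt ((B k + c k) / (A k + c k)) from rfl,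
        ← Real.sqrt_inv, inv_div]
    rw [hli, show sOf k = Real.sqrt ((A k + c k) * (B k + c k)) from rfl,
      show (A k + c k) * (B k + c k) = (A k + c k) / (B k + c k) * (B k + c k)^2 by
        field_simp,
      Real.sqrt_mul (by positivity), Real.sqrt_sq (hBcpos k).le]
  have Emid : ∀ l : Fin N,
      Tendsto (fun k => ‖(∑ j, ((T l) ^ (n k)) (S j k (y j))) - y l‖) atTop (𝓝 0) := by
    intro l
    have hsum : Tendsto
        (fun k => ∑ j : Fin N, (((T l) ^ (n k)) (S j k (y j)) - (if j = l then y j else 0)))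
        atTop (𝓝 0) := by
      have := tendsto_finset_sum Finset.univ (fun j (_ : j ∈ Finset.univ) => h1 l j (y j) (hy j))
      simpa using this
    have heq : (fun k => ∑ j : Fin N,
          (((T l) ^ (n k)) (S j k (y j)) - (if j = l then y j else 0)))
        = fun k => (∑ j : Fin N, ((T l) ^ (n k)) (S j k (y j))) - y l := by
      funext k
      rw [Finset.sum_sub_distrib]
      congr 1
      simp
    rw [heq] at hsum
    simpa using hsum.norm
  have E : ∀ᶠ k in atTop, sOf k < δ/2 ∧ sOf k < ε/4 ∧
      ∀ l : Fin N, ‖(∑ j, ((T l) ^ (n k)) (S j k (y j))) - y l‖ < ε/4 := by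
    have e1 : ∀ᶠ k in atTop, sOf k < δ/2 := hsTo.eventually_lt_const (by linarith)
    have e2 : ∀ᶠ k in atTop, sOf k < ε/4 := hsTo.eventually_lt_const (by linarith)
    have e3 : ∀ᶠ k in atTop, ∀ l : Fin N,
        ‖(∑ j, ((T l) ^ (n k)) (S j k (y j))) - y l‖ < ε/4 := by
      rw [eventually_all]
      intro l
      exact (Emid l).eventually_lt_const (by linarith)
    exact e1.and (e2.and e3)
  obtain ⟨k, hk1, hk2, hk3⟩ := E.exists
  set w := ∑ j : Fin N, S j k (y j) with hw
  set μ : ℂ := ((lam k : ℝ) : ℂ) with hμ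
  have hμnorm : ‖μ‖ = lam k := by
    rw [hμ, Complex.norm_real, Real.norm_eq_abs, abs_of_pos (hlampos k)]
  have hμne : μ ≠ 0 := by
    rw [hμ]
    exact_mod_cast Complex.ofReal_ne_zero.mpr (hlampos k).ne'
  set z := x + μ⁻¹ • w with hz
  refine ⟨z, ?_, ?_⟩
  · -- z ∈ ball x₀ δ
    rw [Metric.mem_ball]
    have hzx : dist z x = (lam k)⁻¹ * B k := by
      rw [hz, dist_eq_norm, add_sub_cancel_left, norm_smul, norm_inv, hμnorm]
    have hBle : (lam k)⁻¹ * B k ≤ sOf k := by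
      rw [← hid2 k]
      have hBB : B k ≤ B k + c k := by have := hc0 k; linarith
      exact mul_le_mul_of_nonneg_left hBB (by positivity)
    have hxx0 : dist x x₀ < δ/2 := by rwa [dist_comm]
    calc dist z x₀ ≤ dist z x + dist x x₀ := dist_triangle _ _ _
      _ < δ/2 + δ/2 := add_lt_add (by rw [hzx]; exact hBle.trans_lt hk1) hxx0
      _ = δ := by ring
  · rw [Set.mem_iUnion]
    refine ⟨(μ, n k), ?_⟩
    rw [Set.mem_setOf_eq, dist_pi_lt_iff hε]
    intro l
    have hTz : μ • (((T l) ^ (n k)) z) =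
        μ • (((T l) ^ (n k)) x) + ∑ j, ((T l) ^ (n k)) (S j k (y j)) := by
      rw [hz, hw, map_add, map_smul, smul_add, smul_inv_smul₀ hμne, map_sum]
    have hfirst : dist (μ • (((T l) ^ (n k)) z)) (∑ j, ((T l) ^ (n k)) (S j k (y j)))
        ≤ sOf k := by
      rw [dist_eq_norm, hTz, add_sub_cancel_right, norm_smul, hμnorm, ← hid1 k]
      have hle : ‖((T l) ^ (n k)) x‖ ≤ A k + c k := by
        have h1' : ‖((T l) ^ (n k)) x‖ ≤ A k :=
          Finset.single_le_sum (f := fun i => ‖((T i) ^ (n k)) x‖)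
            (fun i _ => norm_nonneg _) (Finset.mem_univ l)
        have := hc0 k; linarith
      exact mul_le_mul_of_nonneg_left hle (hlampos k).le
    have hsecond : dist (∑ j, ((T l) ^ (n k)) (S j k (y j))) (y l) < ε/4 := by
      rw [dist_eq_norm]; exact hk3 l
    calc dist (μ • (((T l) ^ (n k)) z)) (u l)
        ≤ dist (μ • (((T l) ^ (n k)) z)) (∑ j, ((T l) ^ (n k)) (S j k (y j)))
          + dist (∑ j, ((T l) ^ (n k)) (S j k (y j))) (y l)
          + dist (y l) (u l) := dist_triangle4 _ _ _ _
      _ < ε/4 + ε/4 + ε/2 :=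
          add_lt_add (add_lt_add_of_le_of_lt (hfirst.trans hk2.le) hsecond) (hyu l)
      _ = ε := by ring

theorem stmt16
    {X : Type*} [NormedAddCommGroup X] [NormedSpace ℂ X] [CompleteSpace X]
    [TopologicalSpace.SeparableSpace X] (hinfdim : ¬ FiniteDimensional ℂ X)
    {N : ℕ} (hN : 2 ≤ N) (T : Fin N → X →L[ℂ] X)
    (n : ℕ → ℕ) (hn : StrictMono n) (hn1 : ∀ k, 1 ≤ n k)
    (hcrit : DSupCriterionWrt T n) :
    Dense {x : X | Dense (Set.range fun p : ℂ × ℕ =>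
      fun l : Fin N => p.1 • (((T l) ^ p.2) x))} := by
  obtain ⟨X₀, Xs, S, hX₀, hXs, h1, h2⟩ := hcrit
  obtain ⟨D, hDc, hDd⟩ := TopologicalSpace.exists_countable_dense (Fin N → X)
  haveI : Countable D := hDc.to_subtype
  set g : D × ℕ → Set X := fun um =>
    ⋃ p : ℂ × ℕ, {x : X | dist (fun l => p.1 • (((T l) ^ p.2) x)) (um.1 : Fin N → X)
      < 1/((um.2 : ℝ)+1)} with hg
  have hopen : ∀ um, IsOpen (g um) := by
    intro um
    apply isOpen_iUnion
    intro p
    have hc : Continuous fun x : X => (fun l : Fin N => p.1 • (((T l) ^ p.2) x)) :=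
      continuous_pi fun l => (((T l) ^ p.2).continuous).const_smul p.1
    exact Metric.isOpen_ball.preimage hc
  have hdense : ∀ um, Dense (g um) := fun um =>
    dsup_dense_approx T n X₀ Xs S hX₀ hXs h1 h2 (um.1 : Fin N → X)
      (by positivity)
  have hB : Dense (⋂ um, g um) := dense_iInter_of_isOpen hopen hdense
  refine hB.mono ?_
  intro x hx
  rw [Set.mem_setOf_eq]
  have hsub2 : (D : Set (Fin N → X)) ⊆ closure (Set.range fun p : ℂ × ℕ =>
      fun l : Fin N => p.1 • (((T l) ^ p.2) x)) := by
    intro u hu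
    rw [Metric.mem_closure_iff]
    intro r hr
    obtain ⟨m, hm⟩ := exists_nat_one_div_lt hr
    have hmem := Set.mem_iInter.mp hx (⟨u, hu⟩, m)
    obtain ⟨p, hp⟩ := Set.mem_iUnion.mp hmem
    refine ⟨_, Set.mem_range_self p, ?_⟩
    rw [dist_comm]
    exact lt_trans hp hm
  exact dense_closure.mp (hDd.mono hsub2)
end
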